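/- arXiv:2109.07030 — 5 statements merged into one kernel-verified Lean document; each statement's English description precedes it below -/
import Mathlib

section
/- Let U, Z, X be random variables and A a random variable, and suppose Z is conditionally independent of (W, Y) given (A, U, X). If a function h satisfies E[Y | A=a, Z=z, X=x] = E[h(W, a, X) | A=a, Z=z, X=x] for all a, z, x, and the completeness condition holds that for every square-integrable function ν, E[ν(U) | A=a, Z, X=x] = 0 almost surely implies ν(U) = 0 almost surely, then E[Y | A=a, U=u, X=x] = E[h(W, a, X) | A=a, U=u, X=x] for all a, u, x. -/
open Finset MeasureTheory

open scoped Classical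

/-- Probability of an event on a finite outcome space with mass function `p`. -/
noncomputable def pr {Ω : Type*} [Fintype Ω] (p : Ω → ℝ) (E : Ω → Prop) : ℝ :=
  ∑ ω, if E ω then p ω else 0

/-- Conditional expectation `E[f | E]` on a finite outcome space. -/
noncomputable def cexp {Ω : Type*} [Fintype Ω] (p : Ω → ℝ) (f : Ω → ℝ) (E : Ω → Prop) : ℝ :=
  (∑ ω, if E ω then p ω * f ω else 0) / pr p E

/-- Conditional probability `P(E | F)` on a finite outcome space. -/
noncomputable def cprob {Ω : Type*} [Fintype Ω] (p : Ω → ℝ) (E F : Ω → Prop) : ℝ :=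
  pr p (fun ω => E ω ∧ F ω) / pr p F

/-- Expectation on a finite outcome space. -/
noncomputable def pexp {Ω : Type*} [Fintype Ω] (p : Ω → ℝ) (f : Ω → ℝ) : ℝ :=
  ∑ ω, p ω * f ω

/-- `S` is conditionally independent of `T` given `C`:  for every pair of (bounded) test
functions `F, G` and every value `c` of `C` with positive probability, the conditional
expectation of the product factorizes. -/
def CondIndep {Ω α β γ : Type*} [Fintype Ω] (p : Ω → ℝ)
    (S : Ω → α) (T : Ω → β) (C : Ω → γ) : Prop :=
  ∀ (F : α → ℝ) (G : β → ℝ) (c : γ), pr p (fun ω => C ω = c) ≠ 0 →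
    cexp p (fun ω => F (S ω) * G (T ω)) (fun ω => C ω = c) =
      cexp p (fun ω => F (S ω)) (fun ω => C ω = c) *
        cexp p (fun ω => G (T ω)) (fun ω => C ω = c)

section Aux

variable {Ω : Type*} [Fintype Ω]

lemma pr_eq_zero_imp (p : Ω → ℝ) (hp : ∀ ω, 0 ≤ p ω) {E : Ω → Prop}
    (h0 : pr p E = 0) : ∀ ω, E ω → p ω = 0 := by
  intro ω hω
  have hnn : ∀ i ∈ Finset.univ, (0:ℝ) ≤ if E i then p i else 0 := by
    intro i _
    split
    · exact hp i
    · exact le_refl 0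
  have := (Finset.sum_eq_zero_iff_of_nonneg hnn).mp h0 ω (Finset.mem_univ ω)
  simpa [hω] using this

lemma cexp_congr (p : Ω → ℝ) {f g : Ω → ℝ} {E : Ω → Prop}
    (hfg : ∀ ω, E ω → f ω = g ω) : cexp p f E = cexp p g E := by
  unfold cexp
  congr 1
  apply Finset.sum_congr rfl
  intro ω _
  split_ifs with hE
  · rw [hfg ω hE]
  · rfl

lemma cexp_sub (p : Ω → ℝ) (f g : Ω → ℝ) (E : Ω → Prop) :
    cexp p (fun ω => f ω - g ω) E = cexp p f E - cexp p g E := by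
  unfold cexp
  rw [← sub_div]
  congr 1
  rw [← Finset.sum_sub_distrib]
  apply Finset.sum_congr rfl
  intro ω _
  split_ifs <;> ring

end Aux

/-- point-treatment proximal identification via an outcome confounding
bridge function: the observed-level bridge equation (conditioning on the treatment-inducing
proxy `Z`) lifts to the latent confounder `U` under completeness, given
`Z ⟂ (W, Y) | (A, U, X)`. -/
theorem stmt_0 {Ω 𝒰 𝒵 𝒳 𝒲 𝒜 : Type*} [Fintype Ω]
    (p : Ω → ℝ) (hp : ∀ ω, 0 ≤ p ω) (hsum : ∑ ω, p ω = 1)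
    (U : Ω → 𝒰) (Z : Ω → 𝒵) (X : Ω → 𝒳) (W : Ω → 𝒲) (A : Ω → 𝒜) (Y : Ω → ℝ)
    (h : 𝒲 → 𝒜 → 𝒳 → ℝ)
    (hCI : CondIndep p Z (fun ω => (W ω, Y ω)) (fun ω => (A ω, U ω, X ω)))
    (hbridge : ∀ a z x, pr p (fun ω => A ω = a ∧ Z ω = z ∧ X ω = x) ≠ 0 →
      cexp p Y (fun ω => A ω = a ∧ Z ω = z ∧ X ω = x) =
        cexp p (fun ω => h (W ω) a (X ω)) (fun ω => A ω = a ∧ Z ω = z ∧ X ω = x))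
    (hcomplete : ∀ (ν : 𝒰 → ℝ) (a : 𝒜) (x : 𝒳),
      (∀ z, pr p (fun ω => A ω = a ∧ Z ω = z ∧ X ω = x) ≠ 0 →
        cexp p (fun ω => ν (U ω)) (fun ω => A ω = a ∧ Z ω = z ∧ X ω = x) = 0) →
      ∀ ω, p ω ≠ 0 → A ω = a → X ω = x → ν (U ω) = 0) :
    ∀ a u x, pr p (fun ω => A ω = a ∧ U ω = u ∧ X ω = x) ≠ 0 →
      cexp p Y (fun ω => A ω = a ∧ U ω = u ∧ X ω = x) =
        cexp p (fun ω => h (W ω) a (X ω)) (fun ω => A ω = a ∧ U ω = u ∧ X ω = x) := by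
  intro a u0 x hpr0
  -- make the latent events opaque so that all `ite` instances are `Classical.propDecidable`
  obtain ⟨Eu, hEude⟩ : ∃ E : 𝒰 → Ω → Prop,
      E = fun u ω => A ω = a ∧ U ω = u ∧ X ω = x := ⟨_, rfl⟩
  have hEufun : ∀ u, Eu u = fun ω => A ω = a ∧ U ω = u ∧ X ω = x :=
    fun u => congrFun hEude u
  have hEuiff : ∀ u ω, Eu u ω ↔ (A ω = a ∧ U ω = u ∧ X ω = x) := by
    intro u ω
    rw [hEufun u]
  let ν : 𝒰 → ℝ := fun u =>
    if pr p (Eu u) = 0 then 0 else cexp p (fun ω => Y ω - h (W ω) a x) (Eu u)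
  have key : ∀ z, pr p (fun ω => A ω = a ∧ Z ω = z ∧ X ω = x) ≠ 0 →
      cexp p (fun ω => ν (U ω)) (fun ω => A ω = a ∧ Z ω = z ∧ X ω = x) = 0 := by
    intro z hz
    obtain ⟨Ez, hEzde⟩ : ∃ E : Ω → Prop,
        E = fun ω => A ω = a ∧ Z ω = z ∧ X ω = x := ⟨_, rfl⟩
    have hEziff : ∀ ω, Ez ω ↔ (A ω = a ∧ Z ω = z ∧ X ω = x) := by
      intro ω
      rw [hEzde]
    rw [← hEzde] at hz ⊢
    have hg0 : cexp p (fun ω => Y ω - h (W ω) a x) Ez = 0 := by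
      have hb : cexp p Y Ez = cexp p (fun ω => h (W ω) a (X ω)) Ez := by
        rw [hEzde]
        exact hbridge a z x (by rw [← hEzde]; exact hz)
      have h1 : cexp p (fun ω => h (W ω) a (X ω)) Ez = cexp p (fun ω => h (W ω) a x) Ez :=
        cexp_congr p (fun ω hω => by rw [((hEziff ω).mp hω).2.2])
      have h2 : cexp p (fun ω => Y ω - h (W ω) a x) Ez
          = cexp p Y Ez - cexp p (fun ω => h (W ω) a x) Ez :=
        cexp_sub p Y (fun ω => h (W ω) a x) Ez
      rw [h2, hb, ← h1, sub_self]
    have hnum : (∑ ω, if Ez ω then p ω * ν (U ω) else 0)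
        = (∑ ω, if Ez ω then p ω * (Y ω - h (W ω) a x) else 0) := by
      -- group both sums by the value of U
      rw [← Finset.sum_fiberwise_of_maps_to (g := U) (t := Finset.univ.image U)
          (fun ω _ => Finset.mem_image_of_mem U (Finset.mem_univ ω))
          (fun ω => if Ez ω then p ω * ν (U ω) else 0),
        ← Finset.sum_fiberwise_of_maps_to (g := U) (t := Finset.univ.image U)
          (fun ω _ => Finset.mem_image_of_mem U (Finset.mem_univ ω))
          (fun ω => if Ez ω then p ω * (Y ω - h (W ω) a x) else 0)]
      apply Finset.sum_congr rfl
      intro u _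
      by_cases hu : pr p (Eu u) = 0
      · -- degenerate fiber: the mass function vanishes there
        have hz0 := pr_eq_zero_imp p hp hu
        apply Finset.sum_congr rfl
        intro ω hω
        rw [Finset.mem_filter] at hω
        split_ifs with hE
        · have hE' := (hEziff ω).mp hE
          have hp0 : p ω = 0 :=
            hz0 ω ((hEuiff u ω).mpr ⟨hE'.1, hω.2, hE'.2.2⟩)
          rw [hp0, zero_mul, zero_mul]
        · rfl
      · -- nondegenerate fiber: use conditional independence
        have hν : ν u = cexp p (fun ω => Y ω - h (W ω) a x) (Eu u) := if_neg hu
        have hset : (fun ω => (A ω, U ω, X ω) = (a, u, x)) = Eu u := by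
          funext ω
          rw [eq_iff_iff, hEuiff u ω]
          constructor
          · intro h'
            injection h' with h1 h2
            injection h2 with h2 h3
            exact ⟨h1, h2, h3⟩
          · rintro ⟨h1, h2, h3⟩
            rw [h1, h2, h3]
        have hCIu := hCI (fun z' => if z' = z then (1:ℝ) else 0)
          (fun wy => wy.2 - h wy.1 a x) (a, u, x) (by rw [hset]; exact hu)
        rw [hset] at hCIu
        unfold cexp at hCIu
        -- hCIu is now an equation between explicit sums divided by pr p (Eu u)
        have hmain : (∑ ω, if Eu u ω then
              p ω * ((if Z ω = z then (1:ℝ) else 0) * (Y ω - h (W ω) a x)) else 0)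
            = (∑ ω, if Eu u ω then p ω * (if Z ω = z then (1:ℝ) else 0) else 0) * ν u := by
          rw [hν]
          unfold cexp
          rw [div_mul_eq_mul_div, div_eq_div_iff hu hu] at hCIu
          exact mul_right_cancel₀ hu hCIu
        -- now compare with the fiber sums
        have hL : (∑ ω ∈ Finset.univ.filter (fun ω => U ω = u),
              if Ez ω then p ω * ν (U ω) else 0)
            = (∑ ω, if Eu u ω then p ω * (if Z ω = z then (1:ℝ) else 0) else 0) * ν u := by
          rw [Finset.sum_mul, Finset.sum_filter]
          apply Finset.sum_congr rfl
          intro ω _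
          by_cases hU : U ω = u
          · by_cases hE : Ez ω
            · have hE' := (hEziff ω).mp hE
              have hEu' : Eu u ω := (hEuiff u ω).mpr ⟨hE'.1, hU, hE'.2.2⟩
              have hZ : Z ω = z := hE'.2.1
              rw [if_pos hU, if_pos hE, if_pos hEu', if_pos hZ, hU]
              ring
            · by_cases hEu2 : Eu u ω
              · have hEu2' := (hEuiff u ω).mp hEu2
                have hZ : Z ω ≠ z := fun hzz =>
                  hE ((hEziff ω).mpr ⟨hEu2'.1, hzz, hEu2'.2.2⟩)
                rw [if_pos hU, if_neg hE, if_pos hEu2, if_neg hZ]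
                ring
              · rw [if_pos hU, if_neg hE, if_neg hEu2]
                ring
          · have hEu2 : ¬ Eu u ω := fun hc => hU ((hEuiff u ω).mp hc).2.1
            rw [if_neg hU, if_neg hEu2]
            ring
        have hR : (∑ ω ∈ Finset.univ.filter (fun ω => U ω = u),
              if Ez ω then p ω * (Y ω - h (W ω) a x) else 0)
            = (∑ ω, if Eu u ω then
                p ω * ((if Z ω = z then (1:ℝ) else 0) * (Y ω - h (W ω) a x)) else 0) := by
          rw [Finset.sum_filter]
          apply Finset.sum_congr rfl
          intro ω _
          by_cases hU : U ω = u
          · by_cases hE : Ez ω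
            · have hE' := (hEziff ω).mp hE
              have hEu' : Eu u ω := (hEuiff u ω).mpr ⟨hE'.1, hU, hE'.2.2⟩
              have hZ : Z ω = z := hE'.2.1
              rw [if_pos hU, if_pos hE, if_pos hEu', if_pos hZ]
              ring
            · by_cases hEu2 : Eu u ω
              · have hEu2' := (hEuiff u ω).mp hEu2
                have hZ : Z ω ≠ z := fun hzz =>
                  hE ((hEziff ω).mpr ⟨hEu2'.1, hzz, hEu2'.2.2⟩)
                rw [if_pos hU, if_neg hE, if_pos hEu2, if_neg hZ]
                ring
              · rw [if_pos hU, if_neg hE, if_neg hEu2]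
          · have hEu2 : ¬ Eu u ω := fun hc => hU ((hEuiff u ω).mp hc).2.1
            rw [if_neg hU, if_neg hEu2]
        rw [hL, hR, hmain]
    have hEq : cexp p (fun ω => ν (U ω)) Ez
        = cexp p (fun ω => Y ω - h (W ω) a x) Ez :=
      congrArg (fun t => t / pr p Ez) hnum
    rw [hEq]
    exact hg0
  -- apply completeness
  have hall := hcomplete ν a x key
  obtain ⟨ω0, hω0E, hω0p⟩ : ∃ ω, (A ω = a ∧ U ω = u0 ∧ X ω = x) ∧ p ω ≠ 0 := by
    by_contra hcon
    push_neg at hcon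
    apply hpr0
    apply Finset.sum_eq_zero
    intro ω _
    split_ifs with hE
    · exact hcon ω hE
    · rfl
  have hνu0 : ν u0 = 0 := by
    have := hall ω0 hω0p hω0E.1 hω0E.2.2
    rwa [hω0E.2.1] at this
  have hpr0' : pr p (Eu u0) ≠ 0 := by
    rw [hEufun u0]
    exact hpr0
  have hg0 : cexp p (fun ω => Y ω - h (W ω) a x) (Eu u0) = 0 := by
    rw [← hνu0]
    exact (if_neg hpr0').symm
  have h2 : cexp p (fun ω => Y ω - h (W ω) a x) (Eu u0)
      = cexp p Y (Eu u0) - cexp p (fun ω => h (W ω) a x) (Eu u0) :=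
    cexp_sub p Y (fun ω => h (W ω) a x) (Eu u0)
  have h1 : cexp p (fun ω => h (W ω) a (X ω)) (Eu u0)
      = cexp p (fun ω => h (W ω) a x) (Eu u0) :=
    cexp_congr p (fun ω hω => by rw [((hEuiff u0 ω).mp hω).2.2])
  rw [← hEufun u0]
  rw [h1]
  have := h2.symm.trans hg0
  linarith
end

section
/- Suppose W is conditionally independent of (Z, A) given (U, X), A is binary, and a function q satisfies 1/P(A=a | W=w, X=x) = E[q(Z, a, X) | A=a, W=w, X=x] for all a, w, x. If the completeness condition holds that for every square-integrable ν, E[ν(U) | A=a, W, X=x] = 0 a.s. implies ν(U) = 0 a.s., then 1/P(A=a | U=u, X=x) = E[q(Z, a, X) | A=a, U=u, X=x] for all a, u, x. -/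
open Finset MeasureTheory

open scoped Classical

section Aux

variable {Ω : Type*} [Fintype Ω]

lemma pr_nonneg (p : Ω → ℝ) (hp : ∀ ω, 0 ≤ p ω) (E : Ω → Prop) : 0 ≤ pr p E := by
  refine Finset.sum_nonneg fun ω _ => ?_
  by_cases h : E ω <;> simp [h, hp ω]

lemma pr_zero (p : Ω → ℝ) (hp : ∀ ω, 0 ≤ p ω) (E : Ω → Prop) (h : pr p E = 0) :
    ∀ ω, E ω → p ω = 0 := by
  intro ω hω
  have hterm := (Finset.sum_eq_zero_iff_of_nonneg (fun i _ => by
    by_cases hi : E i <;> simp [hi, hp i])).mp h ω (Finset.mem_univ ω)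
  simpa [hω] using hterm

lemma fiber_sum {𝒰 : Type*} (U : Ω → 𝒰) (f : Ω → ℝ) :
    ∑ v ∈ Finset.univ.image U, ∑ ω, (if U ω = v then f ω else 0) = ∑ ω, f ω := by
  rw [Finset.sum_comm]
  refine Finset.sum_congr rfl fun ω _ => ?_
  simp [Finset.sum_ite_eq, Finset.mem_image_of_mem]

end Aux

/-- point-treatment identification of the treatment confounding bridge:
the observed-level bridge equation (conditioning on the outcome-inducing proxy `W`)
lifts to the latent confounder `U` under completeness, given `W ⟂ (Z, A) | (U, X)`
and positivity. -/

theorem stmt_1 {Ω 𝒰 𝒵 𝒳 𝒲 : Type*} [Fintype Ω]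
    (p : Ω → ℝ) (hp : ∀ ω, 0 ≤ p ω) (hsum : ∑ ω, p ω = 1)
    (U : Ω → 𝒰) (Z : Ω → 𝒵) (X : Ω → 𝒳) (W : Ω → 𝒲) (A : Ω → Bool)
    (q : 𝒵 → Bool → 𝒳 → ℝ)
    (hCI : CondIndep p W (fun ω => (Z ω, A ω)) (fun ω => (U ω, X ω)))
    (hpos : ∀ (a : Bool) u x, pr p (fun ω => U ω = u ∧ X ω = x) ≠ 0 →
      0 < cprob p (fun ω => A ω = a) (fun ω => U ω = u ∧ X ω = x))
    (hbridge : ∀ (a : Bool) w x, pr p (fun ω => A ω = a ∧ W ω = w ∧ X ω = x) ≠ 0 →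
      (cprob p (fun ω => A ω = a) (fun ω => W ω = w ∧ X ω = x))⁻¹ =
        cexp p (fun ω => q (Z ω) a (X ω)) (fun ω => A ω = a ∧ W ω = w ∧ X ω = x))
    (hcomplete : ∀ (ν : 𝒰 → ℝ) (a : Bool) (x : 𝒳),
      (∀ w, pr p (fun ω => A ω = a ∧ W ω = w ∧ X ω = x) ≠ 0 →
        cexp p (fun ω => ν (U ω)) (fun ω => A ω = a ∧ W ω = w ∧ X ω = x) = 0) →
      ∀ ω, p ω ≠ 0 → A ω = a → X ω = x → ν (U ω) = 0) :
    ∀ (a : Bool) u x, pr p (fun ω => A ω = a ∧ U ω = u ∧ X ω = x) ≠ 0 →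
      (cprob p (fun ω => A ω = a) (fun ω => U ω = u ∧ X ω = x))⁻¹ =
        cexp p (fun ω => q (Z ω) a (X ω)) (fun ω => A ω = a ∧ U ω = u ∧ X ω = x) := by
  intro a u x hne
  classical
  -- abbreviations (as functions of the latent value v)
  set c : 𝒰 → ℝ := fun v => pr p (fun ω => U ω = v ∧ X ω = x) with hc_def
  set d : 𝒰 → ℝ := fun v => pr p (fun ω => A ω = a ∧ U ω = v ∧ X ω = x) with hd_def
  set n : 𝒰 → ℝ := fun v => ∑ ω, if A ω = a ∧ U ω = v ∧ X ω = x then p ω * q (Z ω) a x else 0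
    with hn_def
  set ν : 𝒰 → ℝ := fun v => if d v = 0 then 0 else (n v - c v) / d v with hν_def
  have hcell : ∀ v : 𝒰, (fun ω => (U ω, X ω) = (v, x)) = (fun ω => U ω = v ∧ X ω = x) := by
    intro v; funext ω; rw [Prod.mk.injEq]
  -- c v = 0 → everything on the cell vanishes
  have hcz : ∀ v, c v = 0 → ∀ ω, U ω = v → X ω = x → p ω = 0 := by
    intro v hv ω h1 h2
    exact pr_zero p hp _ hv ω ⟨h1, h2⟩
  have hcd : ∀ v, c v ≠ 0 → d v ≠ 0 := by
    intro v hv hd0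
    have hpos' := hpos a v x hv
    rw [cprob] at hpos'
    have : pr p (fun ω => A ω = a ∧ U ω = v ∧ X ω = x) = d v := rfl
    rw [this, hd0] at hpos'
    simp at hpos'
  -- the key per-cell identity
  have key : ∀ (w : 𝒲) (v : 𝒰),
      ν v * pr p (fun ω => A ω = a ∧ W ω = w ∧ U ω = v ∧ X ω = x)
        = (∑ ω, if A ω = a ∧ W ω = w ∧ U ω = v ∧ X ω = x then p ω * q (Z ω) a x else 0)
          - pr p (fun ω => W ω = w ∧ U ω = v ∧ X ω = x) := by
    intro w v
    by_cases hcv : c v = 0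
    · have hz : ∀ ω, (U ω = v ∧ X ω = x) → p ω = 0 := fun ω h => hcz v hcv ω h.1 h.2
      have e1 : pr p (fun ω => A ω = a ∧ W ω = w ∧ U ω = v ∧ X ω = x) = 0 := by
        refine Finset.sum_eq_zero fun ω _ => ?_
        by_cases h : A ω = a ∧ W ω = w ∧ U ω = v ∧ X ω = x
        · simp [h, hz ω ⟨h.2.2.1, h.2.2.2⟩]
        · simp [h]
      have e2 : (∑ ω, if A ω = a ∧ W ω = w ∧ U ω = v ∧ X ω = x
          then p ω * q (Z ω) a x else 0) = 0 := by
        refine Finset.sum_eq_zero fun ω _ => ?_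
        by_cases h : A ω = a ∧ W ω = w ∧ U ω = v ∧ X ω = x
        · simp [h, hz ω ⟨h.2.2.1, h.2.2.2⟩]
        · simp [h]
      have e3 : pr p (fun ω => W ω = w ∧ U ω = v ∧ X ω = x) = 0 := by
        refine Finset.sum_eq_zero fun ω _ => ?_
        by_cases h : W ω = w ∧ U ω = v ∧ X ω = x
        · simp [h, hz ω ⟨h.2.1, h.2.2⟩]
        · simp [h]
      rw [e1, e2, e3]; ring
    · have hdv := hcd v hcv
      have hprc : pr p (fun ω => (U ω, X ω) = (v, x)) ≠ 0 := by rw [hcell v]; exact hcv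
      -- CI with G reading off q·1{A=a}
      have hci1 := hCI (fun w' => if w' = w then (1:ℝ) else 0)
        (fun za => (if za.2 = a then (1:ℝ) else 0) * q za.1 a x) (v, x) hprc
      -- CI with G the indicator of A=a
      have hci2 := hCI (fun w' => if w' = w then (1:ℝ) else 0)
        (fun za => if za.2 = a then (1:ℝ) else 0) (v, x) hprc
      simp only [cexp, Prod.mk.injEq] at hci1 hci2
      have num1 : (∑ ω, if U ω = v ∧ X ω = x then
          p ω * ((if W ω = w then (1:ℝ) else 0) * ((if A ω = a then (1:ℝ) else 0)
            * q (Z ω) a x)) else 0)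
          = ∑ ω, if A ω = a ∧ W ω = w ∧ U ω = v ∧ X ω = x then p ω * q (Z ω) a x else 0 := by
        refine Finset.sum_congr rfl fun ω _ => ?_
        by_cases h1 : A ω = a <;> by_cases h2 : W ω = w <;>
          by_cases h3 : U ω = v ∧ X ω = x <;> simp [h1, h2, h3] <;> ring
      have num2 : (∑ ω, if U ω = v ∧ X ω = x then
          p ω * (if W ω = w then (1:ℝ) else 0) else 0)
          = pr p (fun ω => W ω = w ∧ U ω = v ∧ X ω = x) := by
        rw [pr]
        refine Finset.sum_congr rfl fun ω _ => ?_
        by_cases h2 : W ω = w <;> by_cases h3 : U ω = v ∧ X ω = x <;> simp [h2, h3, and_assoc]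
      have num3 : (∑ ω, if U ω = v ∧ X ω = x then
          p ω * ((if A ω = a then (1:ℝ) else 0) * q (Z ω) a x) else 0) = n v := by
        simp only [hn_def]
        refine Finset.sum_congr rfl fun ω _ => ?_
        by_cases h1 : A ω = a <;> by_cases h3 : U ω = v ∧ X ω = x <;> simp [h1, h3] <;> ring
      have num4 : (∑ ω, if U ω = v ∧ X ω = x then
          p ω * (if A ω = a then (1:ℝ) else 0) else 0) = d v := by
        simp only [hd_def, pr]
        refine Finset.sum_congr rfl fun ω _ => ?_
        by_cases h1 : A ω = a <;> by_cases h3 : U ω = v ∧ X ω = x <;> simp [h1, h3]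
      have num5 : (∑ ω, if U ω = v ∧ X ω = x then
          p ω * ((if W ω = w then (1:ℝ) else 0) * (if A ω = a then (1:ℝ) else 0)) else 0)
          = pr p (fun ω => A ω = a ∧ W ω = w ∧ U ω = v ∧ X ω = x) := by
        rw [pr]
        refine Finset.sum_congr rfl fun ω _ => ?_
        by_cases h1 : A ω = a <;> by_cases h2 : W ω = w <;>
          by_cases h3 : U ω = v ∧ X ω = x <;> simp [h1, h2, h3]
      rw [num1, num2, num3] at hci1
      rw [num5, num2, num4] at hci2
      have hprcc : pr p (fun ω => U ω = v ∧ X ω = x) = c v := rfl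
      rw [hprcc] at hci1 hci2
      have h1 : (∑ ω, if A ω = a ∧ W ω = w ∧ U ω = v ∧ X ω = x
          then p ω * q (Z ω) a x else 0) * c v
          = pr p (fun ω => W ω = w ∧ U ω = v ∧ X ω = x) * n v := by
        field_simp at hci1
        linear_combination hci1
      have h2 : pr p (fun ω => A ω = a ∧ W ω = w ∧ U ω = v ∧ X ω = x) * c v
          = pr p (fun ω => W ω = w ∧ U ω = v ∧ X ω = x) * d v := by
        field_simp at hci2
        linear_combination hci2
      simp only [hν_def, if_neg hdv]
      have hgoal : ((n v - c v) / d v) * pr p (fun ω => A ω = a ∧ W ω = w ∧ U ω = v ∧ X ω = x)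
          = (∑ ω, if A ω = a ∧ W ω = w ∧ U ω = v ∧ X ω = x then p ω * q (Z ω) a x else 0)
            - pr p (fun ω => W ω = w ∧ U ω = v ∧ X ω = x) := by
        rw [div_mul_eq_mul_div, div_eq_iff hdv]
        have expand : (n v - c v) * pr p (fun ω => A ω = a ∧ W ω = w ∧ U ω = v ∧ X ω = x) * c v
            = ((∑ ω, if A ω = a ∧ W ω = w ∧ U ω = v ∧ X ω = x then p ω * q (Z ω) a x else 0)
              - pr p (fun ω => W ω = w ∧ U ω = v ∧ X ω = x)) * d v * c v := by
          linear_combination (n v - c v) * h2 - d v * h1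
        exact mul_right_cancel₀ hcv (by linear_combination expand)
      exact hgoal
  -- conditional expectation of ν(U) vanishes given (A = a, W = w, X = x)
  have hνzero : ∀ ω, p ω ≠ 0 → A ω = a → X ω = x → ν (U ω) = 0 := by
    refine hcomplete ν a x ?_
    intro w hw
    rw [cexp]
    have hnum : (∑ ω, if A ω = a ∧ W ω = w ∧ X ω = x then p ω * ν (U ω) else 0) = 0 := by
      have hfib : (∑ v ∈ Finset.univ.image U, ∑ ω,
          (if U ω = v then (if A ω = a ∧ W ω = w ∧ X ω = x then p ω * ν (U ω) else 0) else 0))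
          = ∑ ω, if A ω = a ∧ W ω = w ∧ X ω = x then p ω * ν (U ω) else 0 :=
        fiber_sum U _
      rw [← hfib]
      have step : ∀ v ∈ Finset.univ.image U, (∑ ω,
          (if U ω = v then (if A ω = a ∧ W ω = w ∧ X ω = x then p ω * ν (U ω) else 0) else 0))
          = (∑ ω, if A ω = a ∧ W ω = w ∧ U ω = v ∧ X ω = x then p ω * q (Z ω) a x else 0)
            - pr p (fun ω => W ω = w ∧ U ω = v ∧ X ω = x) := by
        intro v _
        rw [← key w v]
        have : ν v * pr p (fun ω => A ω = a ∧ W ω = w ∧ U ω = v ∧ X ω = x)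
            = ∑ ω, if A ω = a ∧ W ω = w ∧ U ω = v ∧ X ω = x then p ω * (ν v) else 0 := by
          rw [pr, Finset.mul_sum]
          refine Finset.sum_congr rfl fun ω _ => ?_
          by_cases h : A ω = a ∧ W ω = w ∧ U ω = v ∧ X ω = x <;> simp [h] <;> ring
        rw [this]
        refine Finset.sum_congr rfl fun ω _ => ?_
        by_cases h3 : U ω = v
        · by_cases h : A ω = a ∧ W ω = w ∧ X ω = x
          · simp [h3, h]
          · have : ¬ (A ω = a ∧ W ω = w ∧ U ω = v ∧ X ω = x) := by tauto
            simp [h3, h, this]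
        · have : ¬ (A ω = a ∧ W ω = w ∧ U ω = v ∧ X ω = x) := by tauto
          simp [h3, this]
      rw [Finset.sum_congr rfl step]
      rw [Finset.sum_sub_distrib]
      have t1 : (∑ v ∈ Finset.univ.image U, ∑ ω,
          if A ω = a ∧ W ω = w ∧ U ω = v ∧ X ω = x then p ω * q (Z ω) a x else 0)
          = ∑ ω, if A ω = a ∧ W ω = w ∧ X ω = x then p ω * q (Z ω) a x else 0 := by
        rw [← fiber_sum U (fun ω => if A ω = a ∧ W ω = w ∧ X ω = x then p ω * q (Z ω) a x else 0)]
        refine Finset.sum_congr rfl fun v _ => Finset.sum_congr rfl fun ω _ => ?_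
        by_cases h3 : U ω = v
        · by_cases h : A ω = a ∧ W ω = w ∧ X ω = x
          · have : A ω = a ∧ W ω = w ∧ U ω = v ∧ X ω = x := by tauto
            simp [h3, h, this]
          · have : ¬(A ω = a ∧ W ω = w ∧ U ω = v ∧ X ω = x) := by tauto
            simp [h3, h, this]
        · have : ¬(A ω = a ∧ W ω = w ∧ U ω = v ∧ X ω = x) := by tauto
          simp [h3, this]
      have t2 : (∑ v ∈ Finset.univ.image U, pr p (fun ω => W ω = w ∧ U ω = v ∧ X ω = x))
          = pr p (fun ω => W ω = w ∧ X ω = x) := by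
        have e1 : ∀ v : 𝒰, pr p (fun ω => W ω = w ∧ U ω = v ∧ X ω = x)
            = ∑ ω, (if U ω = v then (if W ω = w ∧ X ω = x then p ω else 0) else 0) := by
          intro v
          rw [pr]
          refine Finset.sum_congr rfl fun ω _ => ?_
          by_cases h3 : U ω = v
          · by_cases h : W ω = w ∧ X ω = x
            · have hh : W ω = w ∧ U ω = v ∧ X ω = x := by tauto
              simp [h3, h, hh]
            · have hh : ¬(W ω = w ∧ U ω = v ∧ X ω = x) := by tauto
              simp [h3, h, hh]
          · have hh : ¬(W ω = w ∧ U ω = v ∧ X ω = x) := by tauto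
            simp [h3, hh]
        rw [Finset.sum_congr rfl fun v _ => e1 v,
          fiber_sum U (fun ω => if W ω = w ∧ X ω = x then p ω else 0), pr]
        refine Finset.sum_congr rfl fun ω _ => ?_
        by_cases h : W ω = w ∧ X ω = x <;> simp [h]
      rw [t1, t2]
      -- observed bridge gives exactly this
      have hb := hbridge a w x hw
      simp only [cprob, cexp, inv_div] at hb
      have hbb : (∑ ω, if A ω = a ∧ W ω = w ∧ X ω = x then p ω * q (Z ω) a (X ω) else 0)
          = ∑ ω, if A ω = a ∧ W ω = w ∧ X ω = x then p ω * q (Z ω) a x else 0 := by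
        refine Finset.sum_congr rfl fun ω _ => ?_
        by_cases h : A ω = a ∧ W ω = w ∧ X ω = x
        · rw [if_pos h, if_pos h, h.2.2]
        · rw [if_neg h, if_neg h]
      rw [hbb] at hb
      field_simp [hw] at hb
      linarith [hb]
    rw [div_eq_zero_iff]
    exact Or.inl ((Finset.sum_congr rfl fun ω _ => by
      by_cases h : A ω = a ∧ W ω = w ∧ X ω = x <;> simp [h]).trans hnum)
  -- read off the conclusion at u
  have hdu : d u ≠ 0 := hne
  obtain ⟨ω0, hω0⟩ := Finset.exists_ne_zero_of_sum_ne_zero hne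
  have hω0' : (A ω0 = a ∧ U ω0 = u ∧ X ω0 = x) ∧ p ω0 ≠ 0 := by
    by_cases h : A ω0 = a ∧ U ω0 = u ∧ X ω0 = x
    · exact ⟨h, by simpa [h] using hω0⟩
    · simp [h] at hω0
  have hν0 : ν u = 0 := by
    have := hνzero ω0 hω0'.2 hω0'.1.1 hω0'.1.2.2
    rwa [hω0'.1.2.1] at this
  have hnc : n u = c u := by
    simp only [hν_def, if_neg hdu] at hν0
    have := (div_eq_zero_iff.mp hν0).resolve_right hdu
    linarith [this]
  simp only [cprob, cexp, inv_div]
  have hqx : (∑ ω, if A ω = a ∧ U ω = u ∧ X ω = x then p ω * q (Z ω) a (X ω) else 0) = n u := by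
    simp only [hn_def]
    refine Finset.sum_congr rfl fun ω _ => ?_
    by_cases h : A ω = a ∧ U ω = u ∧ X ω = x
    · rw [if_pos h, if_pos h, h.2.2]
    · rw [if_neg h, if_neg h]
  rw [hqx, hnc]
end

section
/- Let P be a d_u × d_z matrix with entries P(U = u_i | Z = z_j) for a jointly finitely-supported pair (U, Z) where every z_j has positive probability. Then the completeness condition—E[ν(U) | Z] = 0 a.s. implies ν(U) = 0 a.s. for all ν—holds if and only if the matrix P has rank d_u, where d_u is the number of support points of U. -/
open Finset MeasureTheory

open scoped Classical

/-- matrix characterization of completeness for categorical variables: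
with `P u z = P(U = u | Z = z)` (every `z` having positive probability), completeness
of the conditional law of `U` given `Z` holds iff `P` has rank equal to the number of
support points of `U` (full row rank). -/
theorem stmt_5 {Ω 𝒰 𝒵 : Type*} [Fintype Ω] [Fintype 𝒰] [Fintype 𝒵] [DecidableEq 𝒰]
    (p : Ω → ℝ) (hp : ∀ ω, 0 ≤ p ω) (hsum : ∑ ω, p ω = 1)
    (U : Ω → 𝒰) (Z : Ω → 𝒵)
    (hz : ∀ z : 𝒵, pr p (fun ω => Z ω = z) ≠ 0)
    (P : Matrix 𝒰 𝒵 ℝ)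
    (hP : ∀ u z, P u z = cprob p (fun ω => U ω = u) (fun ω => Z ω = z)) :
    ((∀ ν : 𝒰 → ℝ,
        (∀ z, cexp p (fun ω => ν (U ω)) (fun ω => Z ω = z) = 0) →
        ∀ ω, p ω ≠ 0 → ν (U ω) = 0) ↔
      P.rank = (univ.filter fun u : 𝒰 => pr p (fun ω => U ω = u) ≠ 0).card) := by
  classical
  set S := univ.filter fun u : 𝒰 => pr p (fun ω => U ω = u) ≠ 0 with hS
  -- joint probability formula
  have hjoint : ∀ u z, pr p (fun ω => U ω = u ∧ Z ω = z)
      = P u z * pr p (fun ω => Z ω = z) := by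
    intro u z
    rw [hP u z, cprob, div_mul_cancel₀ _ (hz z)]
  -- rows outside the support vanish
  have hrow0 : ∀ u, pr p (fun ω => U ω = u) = 0 → ∀ z, P u z = 0 := by
    intro u hu z
    have hω : ∀ ω, U ω = u → p ω = 0 := by
      intro ω hωu
      have h1 := (Finset.sum_eq_zero_iff_of_nonneg (fun ω _ => by
        by_cases h : U ω = u <;> simp [h, hp ω])).mp hu ω (mem_univ ω)
      simpa [hωu] using h1
    have hz0 : pr p (fun ω => U ω = u ∧ Z ω = z) = 0 := by
      apply Finset.sum_eq_zero
      intro ω _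
      by_cases h : U ω = u ∧ Z ω = z
      · simp [h, hω ω h.1]
      · simp [h]
    have h2 := hjoint u z
    rw [hz0] at h2
    exact (mul_eq_zero.mp h2.symm).resolve_right (hz z)
  -- the numerator of the conditional expectation
  have hnum : ∀ (ν : 𝒰 → ℝ) (z : 𝒵),
      (∑ ω, if Z ω = z then p ω * ν (U ω) else 0)
        = ∑ u, ν u * pr p (fun ω => U ω = u ∧ Z ω = z) := by
    intro ν z
    simp_rw [pr, Finset.mul_sum]
    rw [Finset.sum_comm]
    refine Finset.sum_congr rfl fun ω _ => ?_
    by_cases hZ : Z ω = z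
    · rw [Finset.sum_eq_single (U ω)]
      · simp [hZ, mul_comm]
      · intro u _ hu
        rw [if_neg (fun h => hu h.1.symm), mul_zero]
      · simp
    · simp [hZ]
  have hcexp : ∀ (ν : 𝒰 → ℝ) (z : 𝒵),
      (cexp p (fun ω => ν (U ω)) (fun ω => Z ω = z) = 0 ↔ ∑ u, ν u * P u z = 0) := by
    intro ν z
    rw [cexp, div_eq_zero_iff]
    have hnum2 : (∑ ω, if Z ω = z then p ω * ν (U ω) else 0)
        = (∑ u, ν u * P u z) * pr p (fun ω => Z ω = z) := by
      rw [hnum ν z, Finset.sum_mul]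
      exact Finset.sum_congr rfl fun u _ => by rw [hjoint u z, mul_assoc]
    rw [hnum2]
    constructor
    · rintro (h | h)
      · exact (mul_eq_zero.mp h).resolve_right (hz z)
      · exact absurd h (hz z)
    · intro h; left; rw [h, zero_mul]
  -- translation of the a.s. vanishing condition
  have hG : ∀ ν : 𝒰 → ℝ, (∀ ω, p ω ≠ 0 → ν (U ω) = 0) ↔
      (∀ u, pr p (fun ω => U ω = u) ≠ 0 → ν u = 0) := by
    intro ν
    constructor
    · intro h u hu
      unfold pr at hu
      obtain ⟨ω, _, hω⟩ := Finset.exists_ne_zero_of_sum_ne_zero hu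
      by_cases hωu : U ω = u
      · have hpω : p ω ≠ 0 := by simpa [hωu] using hω
        rw [← hωu]; exact h ω hpω
      · simp [hωu] at hω
    · intro h ω hpω
      apply h
      intro h0
      have h1 := (Finset.sum_eq_zero_iff_of_nonneg (fun ω' _ => by
        by_cases hh : U ω' = U ω <;> simp [hh, hp ω'])).mp h0 ω (mem_univ ω)
      simp only [if_pos rfl] at h1
      exact hpω h1
  -- linear algebra setup
  set K := LinearMap.ker (Matrix.mulVecLin P.transpose) with hK
  set g := LinearMap.funLeft ℝ ℝ (fun u : {u : 𝒰 // u ∈ S} => (u : 𝒰)) with hg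
  set W := LinearMap.ker g with hW
  have hKmem : ∀ ν : 𝒰 → ℝ, ν ∈ K ↔ ∀ z, ∑ u, ν u * P u z = 0 := by
    intro ν
    rw [hK, LinearMap.mem_ker, Matrix.mulVecLin_apply, funext_iff]
    apply forall_congr'
    intro z
    simp [Matrix.mulVec, dotProduct, mul_comm]
  have hWmem : ∀ ν : 𝒰 → ℝ, ν ∈ W ↔ ∀ u, pr p (fun ω => U ω = u) ≠ 0 → ν u = 0 := by
    intro ν
    rw [hW, LinearMap.mem_ker, hg, funext_iff]
    simp only [LinearMap.funLeft_apply, Pi.zero_apply]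
    constructor
    · intro h u hu
      exact h ⟨u, by simp [hS, hu]⟩
    · intro h u
      refine h u ?_
      have := u.2
      simp only [hS, Finset.mem_filter] at this
      exact this.2
  have hWK : W ≤ K := by
    intro ν hν
    rw [hKmem]
    intro z
    apply Finset.sum_eq_zero
    intro u _
    by_cases hu : pr p (fun ω => U ω = u) = 0
    · rw [hrow0 u hu z, mul_zero]
    · rw [(hWmem ν).mp hν u hu, zero_mul]
  -- rank–nullity facts
  have hrank1 : P.rank + Module.finrank ℝ ↥K = Fintype.card 𝒰 := by
    rw [← Matrix.rank_transpose P, Matrix.rank, hK,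
      LinearMap.finrank_range_add_finrank_ker]
    simp
  have hrank2 : S.card + Module.finrank ℝ ↥W = Fintype.card 𝒰 := by
    have hsurj : Function.Surjective g :=
      LinearMap.funLeft_surjective_of_injective ℝ ℝ _ Subtype.val_injective
    have h1 := LinearMap.finrank_range_add_finrank_ker g
    rw [LinearMap.range_eq_top.mpr hsurj, finrank_top] at h1
    rw [hW] at *
    simp only [Module.finrank_fintype_fun_eq_card, Fintype.card_coe] at h1 ⊢
    exact h1
  -- the completeness condition is `K ≤ W`
  have hmain : (∀ ν : 𝒰 → ℝ,
      (∀ z, cexp p (fun ω => ν (U ω)) (fun ω => Z ω = z) = 0) →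
      ∀ ω, p ω ≠ 0 → ν (U ω) = 0) ↔ K ≤ W := by
    constructor
    · intro h ν hν
      rw [hWmem, ← hG]
      exact h ν (fun z => (hcexp ν z).mpr (((hKmem ν).mp hν) z))
    · intro h ν hν
      rw [hG]
      exact (hWmem ν).mp (h ((hKmem ν).mpr (fun z => (hcexp ν z).mp (hν z))))
  rw [hmain]
  constructor
  · intro h
    have hKW : K = W := le_antisymm h hWK
    rw [hKW] at hrank1
    omega
  · intro h
    have heq : Module.finrank ℝ ↥K = Module.finrank ℝ ↥W := by omega
    have hWeq : W = K := Submodule.eq_of_le_of_finrank_le hWK (le_of_eq heq)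
    exact hWeq.ge
end

section
/- Under the two-occasion sequential randomization assumption with positivity and consistency, the counterfactual mean is identified by inverse probability weighting: E[Y_{a(0),a(1)}] = E[ Y · 1{A(0)=a(0), A(1)=a(1)} / ( P(A(1)=a(1) | A(0), L(0), L(1)) · P(A(0)=a(0) | L(0)) ) ]. -/
open Finset MeasureTheory

open scoped Classical

lemma key_lemma {Ω γ : Type*} [Fintype Ω] (p : Ω → ℝ)
    (A : Ω → Bool) (Z : Ω → ℝ) (C : Ω → γ) (a : Bool)
    (hCI : CondIndep p A Z C) (c : γ) (hc : pr p (fun ω => C ω = c) ≠ 0) :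
    ∑ ω, (if C ω = c then p ω * (Z ω * (if A ω = a then (1:ℝ) else 0)) else 0) =
      cprob p (fun ω => A ω = a) (fun ω => C ω = c) *
        ∑ ω, (if C ω = c then p ω * Z ω else 0) := by
  have h := hCI (fun x => if x = a then (1:ℝ) else 0) id c hc
  unfold cexp at h
  simp only [id] at h
  have hSA : (∑ ω, if C ω = c then p ω * (if A ω = a then (1:ℝ) else 0) else 0)
      = pr p (fun ω => A ω = a ∧ C ω = c) := by
    unfold pr
    apply Finset.sum_congr rfl
    intro ω _
    by_cases h1 : C ω = c <;> by_cases h2 : A ω = a <;> simp [h1, h2]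
  rw [hSA] at h
  have hS1 : (∑ ω, if C ω = c then p ω * ((if A ω = a then (1:ℝ) else 0) * Z ω) else 0)
      = ∑ ω, (if C ω = c then p ω * (Z ω * (if A ω = a then (1:ℝ) else 0)) else 0) := by
    apply Finset.sum_congr rfl; intro ω _; by_cases h1 : C ω = c <;> simp [h1, mul_comm]
  rw [hS1] at h
  unfold cprob
  field_simp at h ⊢
  apply mul_right_cancel₀ hc
  linear_combination (pr p (fun ω => C ω = c)) * h

lemma step_lemma {Ω γ : Type*} [Fintype Ω] (p : Ω → ℝ) (hp : ∀ ω, 0 ≤ p ω)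
    (A : Ω → Bool) (Z : Ω → ℝ) (C : Ω → γ) (h : γ → ℝ) (a : Bool)
    (hCI : CondIndep p A Z C)
    (hpos : ∀ c, pr p (fun ω => C ω = c) ≠ 0 →
      0 < cprob p (fun ω => A ω = a) (fun ω => C ω = c)) :
    ∑ ω, p ω * (Z ω * (if A ω = a then (1:ℝ) else 0) * h (C ω) /
        cprob p (fun ω' => A ω' = a) (fun ω' => C ω' = C ω)) =
      ∑ ω, p ω * (Z ω * h (C ω)) := by
  classical
  rw [← Finset.sum_fiberwise_of_maps_to
        (fun ω _ => Finset.mem_image_of_mem C (Finset.mem_univ ω))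
        (fun ω => p ω * (Z ω * (if A ω = a then (1:ℝ) else 0) * h (C ω) /
          cprob p (fun ω' => A ω' = a) (fun ω' => C ω' = C ω))),
      ← Finset.sum_fiberwise_of_maps_to
        (fun ω _ => Finset.mem_image_of_mem C (Finset.mem_univ ω))
        (fun ω => p ω * (Z ω * h (C ω)))]
  refine Finset.sum_congr rfl fun c _ => ?_
  have L : ∑ ω ∈ Finset.univ.filter (fun ω => C ω = c),
        p ω * (Z ω * (if A ω = a then (1:ℝ) else 0) * h (C ω) /
          cprob p (fun ω' => A ω' = a) (fun ω' => C ω' = C ω))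
      = (h c / cprob p (fun ω' => A ω' = a) (fun ω' => C ω' = c)) *
        ∑ ω ∈ Finset.univ.filter (fun ω => C ω = c),
          p ω * (Z ω * (if A ω = a then (1:ℝ) else 0)) := by
    rw [Finset.mul_sum]
    refine Finset.sum_congr rfl fun ω hω => ?_
    have hc' : C ω = c := (Finset.mem_filter.mp hω).2
    rw [hc']
    ring
  have R : ∑ ω ∈ Finset.univ.filter (fun ω => C ω = c), p ω * (Z ω * h (C ω))
      = h c * ∑ ω ∈ Finset.univ.filter (fun ω => C ω = c), p ω * Z ω := by
    rw [Finset.mul_sum]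
    refine Finset.sum_congr rfl fun ω hω => ?_
    have hc' : C ω = c := (Finset.mem_filter.mp hω).2
    rw [hc']; ring
  rw [L, R]
  by_cases hprc : pr p (fun ω => C ω = c) = 0
  · have hz : ∀ ω ∈ Finset.univ.filter (fun ω => C ω = c), p ω = 0 := by
      have hpr : pr p (fun ω => C ω = c)
          = ∑ ω ∈ Finset.univ.filter (fun ω => C ω = c), p ω := by
        rw [pr, Finset.sum_filter]
      rw [hpr] at hprc
      exact fun ω hω =>
        (Finset.sum_eq_zero_iff_of_nonneg (fun ω _ => hp ω)).mp hprc ω hω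
    rw [Finset.sum_eq_zero (fun ω hω => by rw [hz ω hω]; ring),
        Finset.sum_eq_zero (fun ω hω => by rw [hz ω hω]; ring)]
    ring
  · have hπ := hpos c hprc
    have hkey := key_lemma p A Z C a hCI c hprc
    rw [← Finset.sum_filter, ← Finset.sum_filter] at hkey
    rw [hkey]
    field_simp

/-- two-occasion IPW identification: under sequential randomization,
consistency and positivity, the counterfactual mean equals the inverse probability
weighted observed outcome mean. -/
theorem stmt_7 {Ω ℒ0 ℒ1 : Type*} [Fintype Ω]
    (p : Ω → ℝ) (hp : ∀ ω, 0 ≤ p ω) (hsum : ∑ ω, p ω = 1)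
    (A0 A1 : Ω → Bool) (L0 : Ω → ℒ0) (L1 : Ω → ℒ1)
    (Y : Ω → ℝ) (Y' : Bool → Bool → Ω → ℝ)
    (a0 a1 : Bool)
    (hcons : ∀ ω, Y ω = Y' (A0 ω) (A1 ω) ω)
    (hSRA0 : CondIndep p A0 (fun ω => Y' a0 a1 ω) L0)
    (hSRA1 : CondIndep p A1 (fun ω => Y' a0 a1 ω) (fun ω => (A0 ω, L0 ω, L1 ω)))
    (hpos0 : ∀ (a : Bool) l0, pr p (fun ω => L0 ω = l0) ≠ 0 →
      0 < cprob p (fun ω => A0 ω = a) (fun ω => L0 ω = l0))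
    (hpos1 : ∀ (a a' : Bool) l0 l1,
      pr p (fun ω => A0 ω = a' ∧ L0 ω = l0 ∧ L1 ω = l1) ≠ 0 →
      0 < cprob p (fun ω => A1 ω = a) (fun ω => A0 ω = a' ∧ L0 ω = l0 ∧ L1 ω = l1)) :
    pexp p (Y' a0 a1) =
      pexp p (fun ω =>
        Y ω * (if A0 ω = a0 ∧ A1 ω = a1 then (1 : ℝ) else 0) /
          (cprob p (fun ω' => A1 ω' = a1)
              (fun ω' => A0 ω' = A0 ω ∧ L0 ω' = L0 ω ∧ L1 ω' = L1 ω) *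
            cprob p (fun ω' => A0 ω' = a0) (fun ω' => L0 ω' = L0 ω))) := by
  classical
  have hpos1' : ∀ c : Bool × ℒ0 × ℒ1,
      pr p (fun ω => (A0 ω, L0 ω, L1 ω) = c) ≠ 0 →
      0 < cprob p (fun ω => A1 ω = a1) (fun ω => (A0 ω, L0 ω, L1 ω) = c) := by
    intro c hc
    have e : (fun ω => (A0 ω, L0 ω, L1 ω) = c)
        = (fun ω => A0 ω = c.1 ∧ L0 ω = c.2.1 ∧ L1 ω = c.2.2) := by
      funext ω; simp [Prod.ext_iff]
    rw [e] at hc ⊢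
    exact hpos1 a1 c.1 c.2.1 c.2.2 hc
  have step1 := step_lemma p hp A1 (fun ω => Y' a0 a1 ω)
    (fun ω => (A0 ω, L0 ω, L1 ω))
    (fun c => (if c.1 = a0 then (1:ℝ) else 0) /
      cprob p (fun ω' => A0 ω' = a0) (fun ω' => L0 ω' = c.2.1)) a1 hSRA1 hpos1'
  have step2 := step_lemma p hp A0 (fun ω => Y' a0 a1 ω) L0 (fun _ => (1:ℝ)) a0
    hSRA0 (fun l0 hl0 => hpos0 a0 l0 hl0)
  unfold pexp
  calc ∑ ω, p ω * Y' a0 a1 ω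
      = ∑ ω, p ω * (Y' a0 a1 ω * (1:ℝ)) := by simp
    _ = ∑ ω, p ω * (Y' a0 a1 ω * (if A0 ω = a0 then (1:ℝ) else 0) * (1:ℝ) /
          cprob p (fun ω' => A0 ω' = a0) (fun ω' => L0 ω' = L0 ω)) := step2.symm
    _ = ∑ ω, p ω * (Y' a0 a1 ω *
          ((if (A0 ω, L0 ω, L1 ω).1 = a0 then (1:ℝ) else 0) /
            cprob p (fun ω' => A0 ω' = a0) (fun ω' => L0 ω' = (A0 ω, L0 ω, L1 ω).2.1))) := by
        refine Finset.sum_congr rfl fun ω _ => ?_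
        simp only []
        ring
    _ = ∑ ω, p ω * (Y' a0 a1 ω * (if A1 ω = a1 then (1:ℝ) else 0) *
          ((if (A0 ω, L0 ω, L1 ω).1 = a0 then (1:ℝ) else 0) /
            cprob p (fun ω' => A0 ω' = a0) (fun ω' => L0 ω' = (A0 ω, L0 ω, L1 ω).2.1)) /
          cprob p (fun ω' => A1 ω' = a1)
            (fun ω' => (A0 ω', L0 ω', L1 ω') = (A0 ω, L0 ω, L1 ω))) := step1.symm
    _ = ∑ ω, p ω * (Y ω * (if A0 ω = a0 ∧ A1 ω = a1 then (1 : ℝ) else 0) /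
          (cprob p (fun ω' => A1 ω' = a1)
              (fun ω' => A0 ω' = A0 ω ∧ L0 ω' = L0 ω ∧ L1 ω' = L1 ω) *
            cprob p (fun ω' => A0 ω' = a0) (fun ω' => L0 ω' = L0 ω))) := by
        refine Finset.sum_congr rfl fun ω _ => ?_
        have e : (fun ω' => (A0 ω', L0 ω', L1 ω') = (A0 ω, L0 ω, L1 ω))
            = (fun ω' => A0 ω' = A0 ω ∧ L0 ω' = L0 ω ∧ L1 ω' = L1 ω) := by
          funext ω'; simp [Prod.ext_iff]
        rw [e]
        by_cases h0 : A0 ω = a0 <;> by_cases h1 : A1 ω = a1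
        · have hY : Y ω = Y' a0 a1 ω := by rw [hcons ω, h0, h1]
          simp only [h0, h1, hY, and_self, if_true, if_pos rfl]
          ring
        · simp [h0, h1]
        · simp [h0, h1]
        · simp [h0, h1]
end

section
/- With the augmented estimating function Ξ_{ā(1)} defined as in the two-occasion proximal doubly robust construction, if the outcome bridge functions (h1, h0) satisfy their latent-level bridge equations but the functions (q1, q0) used in Ξ are arbitrary measurable functions of (Z̄(1), Ā(1), X̄(1)) and (Z(0), A(0), X(0)) respectively, then still E[Ξ_{ā(1)} | V] = E[Y_{ā(1)} | V]. -/
open Finset MeasureTheory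

open scoped Classical

namespace Stmt13
variable {Ω : Type*} [Fintype Ω]

/-- auxiliary: the (unnormalized) conditional sum. -/
noncomputable def Ssum (p : Ω → ℝ) (f : Ω → ℝ) (E : Ω → Prop) : ℝ :=
  ∑ ω, if E ω then p ω * f ω else 0

lemma cexp_eq (p : Ω → ℝ) (f : Ω → ℝ) (E : Ω → Prop) :
    cexp p f E = Ssum p f E / pr p E := rfl

lemma pr_congr (p : Ω → ℝ) {E F : Ω → Prop} (h : ∀ ω, E ω ↔ F ω) : pr p E = pr p F :=
  Finset.sum_congr rfl fun ω _ => by simp only [h ω]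

lemma Ssum_congr (p : Ω → ℝ) {E F : Ω → Prop} {f g : Ω → ℝ}
    (h : ∀ ω, E ω ↔ F ω) (hfg : ∀ ω, F ω → f ω = g ω) :
    Ssum p f E = Ssum p g F := by
  unfold Ssum
  refine Finset.sum_congr rfl fun ω _ => ?_
  by_cases hF : F ω
  · rw [if_pos hF, if_pos ((h ω).mpr hF), hfg ω hF]
  · rw [if_neg hF, if_neg (fun hE => hF ((h ω).mp hE))]

lemma cexp_congr (p : Ω → ℝ) {E F : Ω → Prop} {f g : Ω → ℝ}
    (h : ∀ ω, E ω ↔ F ω) (hfg : ∀ ω, F ω → f ω = g ω) : cexp p f E = cexp p g F := by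
  rw [cexp_eq, cexp_eq, Ssum_congr p h hfg, pr_congr p h]

lemma cexp_sub (p : Ω → ℝ) (f g : Ω → ℝ) (E : Ω → Prop) :
    cexp p (fun ω => f ω - g ω) E = cexp p f E - cexp p g E := by
  unfold cexp
  rw [← sub_div]
  congr 1
  rw [← Finset.sum_sub_distrib]
  exact Finset.sum_congr rfl fun ω _ => by split_ifs <;> ring

lemma Ssum_add (p : Ω → ℝ) (f g : Ω → ℝ) (E : Ω → Prop) :
    Ssum p (fun ω => f ω + g ω) E = Ssum p f E + Ssum p g E := by
  unfold Ssum
  rw [← Finset.sum_add_distrib]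
  exact Finset.sum_congr rfl fun ω _ => by split_ifs <;> ring

lemma Ssum_sub (p : Ω → ℝ) (f g : Ω → ℝ) (E : Ω → Prop) :
    Ssum p (fun ω => f ω - g ω) E = Ssum p f E - Ssum p g E := by
  unfold Ssum
  rw [← Finset.sum_sub_distrib]
  exact Finset.sum_congr rfl fun ω _ => by split_ifs <;> ring

lemma Ssum_neg (p : Ω → ℝ) (f : Ω → ℝ) (E : Ω → Prop) :
    Ssum p (fun ω => -(f ω)) E = - Ssum p f E := by
  unfold Ssum
  rw [← Finset.sum_neg_distrib]
  exact Finset.sum_congr rfl fun ω _ => by split_ifs <;> ring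

lemma pr_eq_zero_imp (p : Ω → ℝ) (hp : ∀ ω, 0 ≤ p ω) {E : Ω → Prop}
    (h : pr p E = 0) : ∀ ω, E ω → p ω = 0 := by
  intro ω hω
  have h0 := (Finset.sum_eq_zero_iff_of_nonneg
    (fun ω _ => by split_ifs; exacts [hp ω, le_rfl])).mp h ω (Finset.mem_univ ω)
  simpa [hω] using h0

lemma Ssum_of_cexp_zero (p : Ω → ℝ) {f : Ω → ℝ} {E : Ω → Prop} (hE : pr p E ≠ 0)
    (h : cexp p f E = 0) : Ssum p f E = 0 := by
  rw [cexp_eq] at h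
  rcases div_eq_zero_iff.mp h with h' | h'
  · exact h'
  · exact absurd h' hE

lemma cexp_eq_zero (p : Ω → ℝ) {f : Ω → ℝ} {E : Ω → Prop}
    (h : Ssum p f E = 0) : cexp p f E = 0 := by
  rw [cexp_eq, h, zero_div]

lemma Ssum_eq_cexp_mul_pr (p : Ω → ℝ) (f : Ω → ℝ) (E : Ω → Prop) (hE : pr p E ≠ 0) :
    Ssum p f E = cexp p f E * pr p E := by
  rw [cexp_eq, div_mul_cancel₀ _ hE]

lemma cexp_indicator (p : Ω → ℝ) (D E : Ω → Prop) [DecidablePred D] :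
    cexp p (fun ω => if D ω then (1:ℝ) else 0) E = pr p (fun ω => D ω ∧ E ω) / pr p E := by
  unfold cexp pr
  congr 1
  exact Finset.sum_congr rfl fun ω _ => by split_ifs <;> simp_all

lemma Ssum_zero_of_fiber {γ : Type*} (p : Ω → ℝ) (hp : ∀ ω, 0 ≤ p ω) (g : Ω → γ)
    (f : Ω → ℝ) (E : γ → Prop)
    (h : ∀ a, pr p (fun ω => g ω = a) ≠ 0 → Ssum p f (fun ω => g ω = a) = 0) :
    Ssum p f (fun ω => E (g ω)) = 0 := by
  classical
  unfold Ssum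
  have hfib := Finset.sum_fiberwise_of_maps_to (s := Finset.univ) (t := Finset.univ.image g)
    (g := g) (f := fun ω => if E (g ω) then p ω * f ω else 0)
    (fun x _ => Finset.mem_image_of_mem g (Finset.mem_univ x))
  rw [← hfib]
  refine Finset.sum_eq_zero fun a _ => ?_
  by_cases hpr : pr p (fun ω => g ω = a) = 0
  · refine Finset.sum_eq_zero fun ω hω => ?_
    have hga : g ω = a := by simpa using (Finset.mem_filter.mp hω).2
    have hp0 : p ω = 0 := pr_eq_zero_imp p hp hpr ω hga
    simp [hp0]
  · have key := h a hpr
    unfold Ssum at key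
    by_cases hEa : E a
    · have e : ∀ ω ∈ Finset.univ.filter (fun ω => g ω = a),
          (if E (g ω) then p ω * f ω else 0) = p ω * f ω := by
        intro ω hω
        have hga : g ω = a := by simpa using (Finset.mem_filter.mp hω).2
        rw [hga, if_pos hEa]
      rw [Finset.sum_congr rfl e, Finset.sum_filter]
      exact key
    · refine Finset.sum_eq_zero fun ω hω => ?_
      have hga : g ω = a := by simpa using (Finset.mem_filter.mp hω).2
      rw [hga, if_neg hEa]

end Stmt13


/-- double robustness, outcome-bridge side: if `(h1, h0)` satisfy their
latent-level outcome bridge equations, then the augmented estimating function `Ξ` built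
with *arbitrary* functions `(q1, q0)` of the treatment-inducing proxies still satisfies
`E[Ξ_{ā(1)} | V] = E[Y_{ā(1)} | V]`. -/
theorem stmt_13 {Ω 𝒳0 𝒳1 𝒵0 𝒵1 𝒲0 𝒲1 𝒰0 𝒰1 𝒱 : Type*} [Fintype Ω]
    (p : Ω → ℝ) (hp : ∀ ω, 0 ≤ p ω) (hsum : ∑ ω, p ω = 1)
    (A0 A1 : Ω → Bool) (X0 : Ω → 𝒳0) (X1 : Ω → 𝒳1)
    (Z0 : Ω → 𝒵0) (Z1 : Ω → 𝒵1) (W0 : Ω → 𝒲0) (W1 : Ω → 𝒲1)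
    (U0 : Ω → 𝒰0) (U1 : Ω → 𝒰1)
    (Y : Ω → ℝ) (Y' : Bool → Bool → Ω → ℝ) (W1' : Bool → Ω → 𝒲1)
    (h1 : 𝒲0 × 𝒲1 → Bool × Bool → 𝒳0 × 𝒳1 → ℝ)
    (h0 : 𝒲0 → Bool × Bool → 𝒳0 → ℝ)
    -- arbitrary measurable functions in place of the treatment bridges
    (q0 : 𝒵0 → Bool → 𝒳0 → ℝ)
    (q1 : 𝒵0 × 𝒵1 → Bool × Bool → 𝒳0 × 𝒳1 → ℝ)
    (v : 𝒳0 → 𝒱)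
    -- consistency and positivity
    (hconsY : ∀ ω, Y ω = Y' (A0 ω) (A1 ω) ω)
    (hconsW : ∀ ω, W1 ω = W1' (A0 ω) ω)
    (hpos0 : ∀ (a : Bool) u0 x0, pr p (fun ω => U0 ω = u0 ∧ X0 ω = x0) ≠ 0 →
      0 < cprob p (fun ω => A0 ω = a) (fun ω => U0 ω = u0 ∧ X0 ω = x0))
    (hpos1 : ∀ (a a' : Bool) u0 u1 x0 x1,
      pr p (fun ω => A0 ω = a' ∧ U0 ω = u0 ∧ U1 ω = u1 ∧ X0 ω = x0 ∧ X1 ω = x1) ≠ 0 →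
      0 < cprob p (fun ω => A1 ω = a)
        (fun ω => A0 ω = a' ∧ U0 ω = u0 ∧ U1 ω = u1 ∧ X0 ω = x0 ∧ X1 ω = x1))
    -- sequential proximal latent randomization
    (hLR1 : ∀ b0 b1 : Bool, CondIndep p (fun ω => (Z0 ω, Z1 ω, A1 ω))
      (fun ω => (W0 ω, W1' b0 ω, Y' b0 b1 ω))
      (fun ω => (A0 ω, X0 ω, X1 ω, U0 ω, U1 ω)))
    (hLR0 : ∀ b0 b1 : Bool, CondIndep p (fun ω => (Z0 ω, A0 ω))
      (fun ω => (W0 ω, Y' b0 b1 ω)) (fun ω => (X0 ω, U0 ω)))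
    -- latent-level outcome bridge equations for (h1, h0)
    (hbridgeh1 : ∀ (b0 b1 : Bool) u0 u1 x0 x1,
      pr p (fun ω => A0 ω = b0 ∧ A1 ω = b1 ∧ U0 ω = u0 ∧ U1 ω = u1 ∧
        X0 ω = x0 ∧ X1 ω = x1) ≠ 0 →
      cexp p (fun ω => h1 (W0 ω, W1 ω) (b0, b1) (X0 ω, X1 ω))
          (fun ω => A0 ω = b0 ∧ A1 ω = b1 ∧ U0 ω = u0 ∧ U1 ω = u1 ∧
            X0 ω = x0 ∧ X1 ω = x1) =
        cexp p Y (fun ω => A0 ω = b0 ∧ A1 ω = b1 ∧ U0 ω = u0 ∧ U1 ω = u1 ∧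
          X0 ω = x0 ∧ X1 ω = x1))
    (hbridgeh0 : ∀ (b0 b1 : Bool) u0 x0,
      pr p (fun ω => A0 ω = b0 ∧ U0 ω = u0 ∧ X0 ω = x0) ≠ 0 →
      cexp p (Y' b0 b1) (fun ω => A0 ω = b0 ∧ U0 ω = u0 ∧ X0 ω = x0) =
        cexp p (fun ω => h0 (W0 ω) (b0, b1) (X0 ω))
          (fun ω => A0 ω = b0 ∧ U0 ω = u0 ∧ X0 ω = x0))
    -- the augmented (doubly-robust) estimating function Ξ
    (Xi : Bool × Bool → Ω → ℝ)
    (hXi : ∀ (b0 b1 : Bool) ω, Xi (b0, b1) ω =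
      (if A0 ω = b0 ∧ A1 ω = b1 then (1 : ℝ) else 0) *
          q1 (Z0 ω, Z1 ω) (b0, b1) (X0 ω, X1 ω) *
          (Y ω - h1 (W0 ω, W1 ω) (b0, b1) (X0 ω, X1 ω)) +
        (if A0 ω = b0 then (1 : ℝ) else 0) * q0 (Z0 ω) b0 (X0 ω) *
          (h1 (W0 ω, W1 ω) (b0, b1) (X0 ω, X1 ω) - h0 (W0 ω) (b0, b1) (X0 ω)) +
        h0 (W0 ω) (b0, b1) (X0 ω)) :
    ∀ (b0 b1 : Bool) (c : 𝒱), pr p (fun ω => v (X0 ω) = c) ≠ 0 →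
      cexp p (Xi (b0, b1)) (fun ω => v (X0 ω) = c) =
        cexp p (Y' b0 b1) (fun ω => v (X0 ω) = c) := by
  intro b0 b1 c hVc
  -- KEY LEMMA 1
  have keyG1 : ∀ x0 x1 u0 u1,
      pr p (fun ω => (A0 ω, X0 ω, X1 ω, U0 ω, U1 ω) = (b0, x0, x1, u0, u1)) ≠ 0 →
      cexp p (fun ω => Y' b0 b1 ω - h1 (W0 ω, W1' b0 ω) (b0, b1) (x0, x1))
        (fun ω => (A0 ω, X0 ω, X1 ω, U0 ω, U1 ω) = (b0, x0, x1, u0, u1)) = 0 := by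
    intro x0 x1 u0 u1 hE
    set E : Ω → Prop := fun ω => (A0 ω, X0 ω, X1 ω, U0 ω, U1 ω) = (b0, x0, x1, u0, u1)
      with hEdef
    have hEiff : ∀ ω, E ω ↔
        A0 ω = b0 ∧ X0 ω = x0 ∧ X1 ω = x1 ∧ U0 ω = u0 ∧ U1 ω = u1 := by
      intro ω; simp [hEdef, Prod.ext_iff]
    have hE' : pr p (fun ω => A0 ω = b0 ∧ U0 ω = u0 ∧ U1 ω = u1 ∧ X0 ω = x0 ∧ X1 ω = x1)
        ≠ 0 := by
      have e : pr p E = pr p (fun ω => A0 ω = b0 ∧ U0 ω = u0 ∧ U1 ω = u1 ∧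
          X0 ω = x0 ∧ X1 ω = x1) := Stmt13.pr_congr p (fun ω => by rw [hEiff ω]; tauto)
      rw [← e]; exact hE
    have hposA1 := hpos1 b1 b0 u0 u1 x0 x1 hE'
    rw [cprob] at hposA1
    set Cb : Ω → Prop := fun ω => A0 ω = b0 ∧ A1 ω = b1 ∧ U0 ω = u0 ∧ U1 ω = u1 ∧
      X0 ω = x0 ∧ X1 ω = x1 with hCbdef
    have hCbE : ∀ ω, Cb ω ↔ (E ω ∧ A1 ω = b1) := by
      intro ω; rw [hEiff ω]; simp only [hCbdef]; try tauto
    have hCb : pr p Cb ≠ 0 := by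
      have e : pr p (fun ω => A1 ω = b1 ∧ A0 ω = b0 ∧ U0 ω = u0 ∧ U1 ω = u1 ∧
          X0 ω = x0 ∧ X1 ω = x1) = pr p Cb :=
        Stmt13.pr_congr p (fun ω => by simp only [hCbdef]; try tauto)
      intro h0
      rw [e, h0, zero_div] at hposA1
      exact lt_irrefl 0 hposA1
    have hbr := hbridgeh1 b0 b1 u0 u1 x0 x1 hCb
    have hGcb : cexp p (fun ω => Y' b0 b1 ω - h1 (W0 ω, W1' b0 ω) (b0, b1) (x0, x1)) Cb
        = 0 := by
      rw [Stmt13.cexp_sub]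
      have e1 : cexp p (fun ω => Y' b0 b1 ω) Cb = cexp p Y Cb := by
        refine Stmt13.cexp_congr p (fun ω => Iff.rfl) (fun ω hω => ?_)
        rw [hconsY ω, hω.1, hω.2.1]
      have e2 : cexp p (fun ω => h1 (W0 ω, W1' b0 ω) (b0, b1) (x0, x1)) Cb =
          cexp p (fun ω => h1 (W0 ω, W1 ω) (b0, b1) (X0 ω, X1 ω)) Cb := by
        refine Stmt13.cexp_congr p (fun ω => Iff.rfl) (fun ω hω => ?_)
        rw [hconsW ω, hω.1, hω.2.2.2.2.1, hω.2.2.2.2.2]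
      rw [e1, e2, hbr, sub_self]
    have hfac : cexp p (fun ω => (if A1 ω = b1 then (1:ℝ) else 0) *
          (Y' b0 b1 ω - h1 (W0 ω, W1' b0 ω) (b0, b1) (x0, x1))) E =
        cexp p (fun ω => if A1 ω = b1 then (1:ℝ) else 0) E *
          cexp p (fun ω => Y' b0 b1 ω - h1 (W0 ω, W1' b0 ω) (b0, b1) (x0, x1)) E :=
      hLR1 b0 b1 (fun t => if t.2.2 = b1 then (1:ℝ) else 0)
        (fun t => t.2.2 - h1 (t.1, t.2.1) (b0, b1) (x0, x1)) (b0, x0, x1, u0, u1) hE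
    have hswap : Stmt13.Ssum p (fun ω => (if A1 ω = b1 then (1:ℝ) else 0) *
        (Y' b0 b1 ω - h1 (W0 ω, W1' b0 ω) (b0, b1) (x0, x1))) E =
        Stmt13.Ssum p (fun ω => Y' b0 b1 ω - h1 (W0 ω, W1' b0 ω) (b0, b1) (x0, x1)) Cb := by
      unfold Stmt13.Ssum
      refine Finset.sum_congr rfl fun ω _ => ?_
      by_cases hCbω : Cb ω
      · have hEω : E ω := ((hCbE ω).mp hCbω).1
        have hA1 : A1 ω = b1 := ((hCbE ω).mp hCbω).2
        rw [if_pos hEω, if_pos hCbω]; beta_reduce; rw [if_pos hA1]; ring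
      · by_cases hEω : E ω
        · have hA1 : ¬ A1 ω = b1 := fun h => hCbω ((hCbE ω).mpr ⟨hEω, h⟩)
          rw [if_pos hEω, if_neg hCbω]; beta_reduce; rw [if_neg hA1]; ring
        · have hEω2 : ¬ E ω := hEω
          rw [if_neg hEω2, if_neg hCbω]
    have hlhs : cexp p (fun ω => (if A1 ω = b1 then (1:ℝ) else 0) *
        (Y' b0 b1 ω - h1 (W0 ω, W1' b0 ω) (b0, b1) (x0, x1))) E = 0 := by
      refine Stmt13.cexp_eq_zero p ?_
      rw [hswap]
      exact Stmt13.Ssum_of_cexp_zero p hCb hGcb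
    have hind : cexp p (fun ω => if A1 ω = b1 then (1:ℝ) else 0) E ≠ 0 := by
      have e0 : cexp p (fun ω => if A1 ω = b1 then (1:ℝ) else 0) E =
          pr p (fun ω => A1 ω = b1 ∧ E ω) / pr p E :=
        Stmt13.cexp_indicator p (fun ω => A1 ω = b1) E
      have e : pr p (fun ω => A1 ω = b1 ∧ E ω) = pr p Cb :=
        Stmt13.pr_congr p (fun ω => by rw [hCbE ω]; tauto)
      rw [e0, e]
      exact div_ne_zero hCb hE
    rw [hlhs] at hfac
    rcases mul_eq_zero.mp hfac.symm with h' | h'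
    · exact absurd h' hind
    · exact h'
  -- KEY LEMMA 0
  have keyG0 : ∀ x0 u0,
      pr p (fun ω => (X0 ω, U0 ω) = (x0, u0)) ≠ 0 →
      cexp p (fun ω => Y' b0 b1 ω - h0 (W0 ω) (b0, b1) x0)
        (fun ω => (X0 ω, U0 ω) = (x0, u0)) = 0 := by
    intro x0 u0 hE
    set E : Ω → Prop := fun ω => (X0 ω, U0 ω) = (x0, u0) with hEdef
    have hEiff : ∀ ω, E ω ↔ X0 ω = x0 ∧ U0 ω = u0 := by
      intro ω; simp [hEdef, Prod.ext_iff]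
    have hE' : pr p (fun ω => U0 ω = u0 ∧ X0 ω = x0) ≠ 0 := by
      have e : pr p E = pr p (fun ω => U0 ω = u0 ∧ X0 ω = x0) :=
        Stmt13.pr_congr p (fun ω => by rw [hEiff ω]; tauto)
      rw [← e]; exact hE
    have hposA0 := hpos0 b0 u0 x0 hE'
    rw [cprob] at hposA0
    set Cb : Ω → Prop := fun ω => A0 ω = b0 ∧ U0 ω = u0 ∧ X0 ω = x0 with hCbdef
    have hCbE : ∀ ω, Cb ω ↔ (E ω ∧ A0 ω = b0) := by
      intro ω; rw [hEiff ω]; simp only [hCbdef]; try tauto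
    have hCb : pr p Cb ≠ 0 := by
      have e : pr p (fun ω => A0 ω = b0 ∧ U0 ω = u0 ∧ X0 ω = x0) = pr p Cb :=
        Stmt13.pr_congr p (fun ω => by simp only [hCbdef]; try tauto)
      intro h0
      rw [e, h0, zero_div] at hposA0
      exact lt_irrefl 0 hposA0
    have hbr := hbridgeh0 b0 b1 u0 x0 hCb
    have hGcb : cexp p (fun ω => Y' b0 b1 ω - h0 (W0 ω) (b0, b1) x0) Cb = 0 := by
      rw [Stmt13.cexp_sub]
      have e1 : cexp p (fun ω => Y' b0 b1 ω) Cb = cexp p (Y' b0 b1) Cb :=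
        Stmt13.cexp_congr p (fun ω => Iff.rfl) (fun ω _ => rfl)
      have e2 : cexp p (fun ω => h0 (W0 ω) (b0, b1) x0) Cb =
          cexp p (fun ω => h0 (W0 ω) (b0, b1) (X0 ω)) Cb := by
        refine Stmt13.cexp_congr p (fun ω => Iff.rfl) (fun ω hω => ?_)
        rw [hω.2.2]
      rw [e1, e2, hbr, sub_self]
    have hfac : cexp p (fun ω => (if A0 ω = b0 then (1:ℝ) else 0) *
          (Y' b0 b1 ω - h0 (W0 ω) (b0, b1) x0)) E =
        cexp p (fun ω => if A0 ω = b0 then (1:ℝ) else 0) E *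
          cexp p (fun ω => Y' b0 b1 ω - h0 (W0 ω) (b0, b1) x0) E :=
      hLR0 b0 b1 (fun t => if t.2 = b0 then (1:ℝ) else 0)
        (fun t => t.2 - h0 t.1 (b0, b1) x0) (x0, u0) hE
    have hswap : Stmt13.Ssum p (fun ω => (if A0 ω = b0 then (1:ℝ) else 0) *
        (Y' b0 b1 ω - h0 (W0 ω) (b0, b1) x0)) E =
        Stmt13.Ssum p (fun ω => Y' b0 b1 ω - h0 (W0 ω) (b0, b1) x0) Cb := by
      unfold Stmt13.Ssum
      refine Finset.sum_congr rfl fun ω _ => ?_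
      by_cases hCbω : Cb ω
      · have hEω : E ω := ((hCbE ω).mp hCbω).1
        have hA0 : A0 ω = b0 := ((hCbE ω).mp hCbω).2
        rw [if_pos hEω, if_pos hCbω]; beta_reduce; rw [if_pos hA0]; ring
      · by_cases hEω : E ω
        · have hA0 : ¬ A0 ω = b0 := fun h => hCbω ((hCbE ω).mpr ⟨hEω, h⟩)
          rw [if_pos hEω, if_neg hCbω]; beta_reduce; rw [if_neg hA0]; ring
        · have hEω2 : ¬ E ω := hEω
          rw [if_neg hEω2, if_neg hCbω]
    have hlhs : cexp p (fun ω => (if A0 ω = b0 then (1:ℝ) else 0) *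
        (Y' b0 b1 ω - h0 (W0 ω) (b0, b1) x0)) E = 0 := by
      refine Stmt13.cexp_eq_zero p ?_
      rw [hswap]
      exact Stmt13.Ssum_of_cexp_zero p hCb hGcb
    have hind : cexp p (fun ω => if A0 ω = b0 then (1:ℝ) else 0) E ≠ 0 := by
      have e0 : cexp p (fun ω => if A0 ω = b0 then (1:ℝ) else 0) E =
          pr p (fun ω => A0 ω = b0 ∧ E ω) / pr p E :=
        Stmt13.cexp_indicator p (fun ω => A0 ω = b0) E
      have e : pr p (fun ω => A0 ω = b0 ∧ E ω) = pr p Cb :=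
        Stmt13.pr_congr p (fun ω => by rw [hCbE ω]; tauto)
      rw [e0, e]
      exact div_ne_zero hCb hE
    rw [hlhs] at hfac
    rcases mul_eq_zero.mp hfac.symm with h' | h'
    · exact absurd h' hind
    · exact h'
  -- the four pieces of Ξ - Y'
  set f1 : Ω → ℝ := fun ω => (if A0 ω = b0 ∧ A1 ω = b1 then (1:ℝ) else 0) *
      q1 (Z0 ω, Z1 ω) (b0, b1) (X0 ω, X1 ω) *
      (Y ω - h1 (W0 ω, W1 ω) (b0, b1) (X0 ω, X1 ω)) with hf1
  set f2a : Ω → ℝ := fun ω => (if A0 ω = b0 then (1:ℝ) else 0) * q0 (Z0 ω) b0 (X0 ω) *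
      (h1 (W0 ω, W1 ω) (b0, b1) (X0 ω, X1 ω) - Y' b0 b1 ω) with hf2a
  set f2b : Ω → ℝ := fun ω => (if A0 ω = b0 then (1:ℝ) else 0) * q0 (Z0 ω) b0 (X0 ω) *
      (Y' b0 b1 ω - h0 (W0 ω) (b0, b1) (X0 ω)) with hf2b
  set f3 : Ω → ℝ := fun ω => h0 (W0 ω) (b0, b1) (X0 ω) - Y' b0 b1 ω with hf3
  -- piece 1
  have hsum1 : Stmt13.Ssum p f1 (fun ω => v (X0 ω) = c) = 0 := by
    refine Stmt13.Ssum_zero_of_fiber p hp (fun ω => (A0 ω, X0 ω, X1 ω, U0 ω, U1 ω)) f1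
      (fun t => v t.2.1 = c) ?_
    intro a ha
    obtain ⟨a0, x0, x1, u0, u1⟩ := a
    by_cases hab : a0 = b0
    · subst hab
      show Stmt13.Ssum p f1
        (fun ω => (A0 ω, X0 ω, X1 ω, U0 ω, U1 ω) = (a0, x0, x1, u0, u1)) = 0
      have ha' : pr p
          (fun ω => (A0 ω, X0 ω, X1 ω, U0 ω, U1 ω) = (a0, x0, x1, u0, u1)) ≠ 0 := ha
      have hfac : cexp p (fun ω => ((if A1 ω = b1 then (1:ℝ) else 0) *
            q1 (Z0 ω, Z1 ω) (a0, b1) (x0, x1)) *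
            (Y' a0 b1 ω - h1 (W0 ω, W1' a0 ω) (a0, b1) (x0, x1)))
          (fun ω => (A0 ω, X0 ω, X1 ω, U0 ω, U1 ω) = (a0, x0, x1, u0, u1)) =
          cexp p (fun ω => (if A1 ω = b1 then (1:ℝ) else 0) *
            q1 (Z0 ω, Z1 ω) (a0, b1) (x0, x1))
            (fun ω => (A0 ω, X0 ω, X1 ω, U0 ω, U1 ω) = (a0, x0, x1, u0, u1)) *
          cexp p (fun ω => Y' a0 b1 ω - h1 (W0 ω, W1' a0 ω) (a0, b1) (x0, x1))
            (fun ω => (A0 ω, X0 ω, X1 ω, U0 ω, U1 ω) = (a0, x0, x1, u0, u1)) :=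
        hLR1 a0 b1 (fun t => (if t.2.2 = b1 then (1:ℝ) else 0) *
            q1 (t.1, t.2.1) (a0, b1) (x0, x1))
          (fun t => t.2.2 - h1 (t.1, t.2.1) (a0, b1) (x0, x1)) (a0, x0, x1, u0, u1) ha'
      have hswap : Stmt13.Ssum p f1
          (fun ω => (A0 ω, X0 ω, X1 ω, U0 ω, U1 ω) = (a0, x0, x1, u0, u1)) =
          Stmt13.Ssum p (fun ω => ((if A1 ω = b1 then (1:ℝ) else 0) *
            q1 (Z0 ω, Z1 ω) (a0, b1) (x0, x1)) *
            (Y' a0 b1 ω - h1 (W0 ω, W1' a0 ω) (a0, b1) (x0, x1)))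
          (fun ω => (A0 ω, X0 ω, X1 ω, U0 ω, U1 ω) = (a0, x0, x1, u0, u1)) := by
        refine Stmt13.Ssum_congr p (fun ω => Iff.rfl) (fun ω hω => ?_)
        have h5 : A0 ω = a0 ∧ X0 ω = x0 ∧ X1 ω = x1 ∧ U0 ω = u0 ∧ U1 ω = u1 := by
          simpa [Prod.ext_iff] using hω
        simp only [hf1]
        by_cases hA1 : A1 ω = b1
        · rw [if_pos ⟨h5.1, hA1⟩, if_pos hA1, hconsY ω, hconsW ω, h5.1, hA1,
            h5.2.1, h5.2.2.1]
          try ring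
        · rw [if_neg (fun h => hA1 h.2), if_neg hA1]
          ring
      rw [hswap, Stmt13.Ssum_eq_cexp_mul_pr p _ _ ha', hfac,
        keyG1 x0 x1 u0 u1 ha', mul_zero, zero_mul]
    · show Stmt13.Ssum p f1
        (fun ω => (A0 ω, X0 ω, X1 ω, U0 ω, U1 ω) = (a0, x0, x1, u0, u1)) = 0
      unfold Stmt13.Ssum
      refine Finset.sum_eq_zero fun ω _ => ?_
      by_cases hEω : (A0 ω, X0 ω, X1 ω, U0 ω, U1 ω) = (a0, x0, x1, u0, u1)
      · rw [if_pos hEω]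
        have hA0 : A0 ω = a0 := congrArg Prod.fst hEω
        have hnot : ¬ (A0 ω = b0 ∧ A1 ω = b1) := fun h => hab (by rw [← hA0, h.1])
        simp only [hf1]
        rw [if_neg hnot]
        ring
      · rw [if_neg hEω]
  -- piece 2a
  have hsum2a : Stmt13.Ssum p f2a (fun ω => v (X0 ω) = c) = 0 := by
    refine Stmt13.Ssum_zero_of_fiber p hp (fun ω => (A0 ω, X0 ω, X1 ω, U0 ω, U1 ω)) f2a
      (fun t => v t.2.1 = c) ?_
    intro a ha
    obtain ⟨a0, x0, x1, u0, u1⟩ := a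
    by_cases hab : a0 = b0
    · subst hab
      show Stmt13.Ssum p f2a
        (fun ω => (A0 ω, X0 ω, X1 ω, U0 ω, U1 ω) = (a0, x0, x1, u0, u1)) = 0
      have ha' : pr p
          (fun ω => (A0 ω, X0 ω, X1 ω, U0 ω, U1 ω) = (a0, x0, x1, u0, u1)) ≠ 0 := ha
      have hfac : cexp p (fun ω => (-(q0 (Z0 ω) a0 x0)) *
            (Y' a0 b1 ω - h1 (W0 ω, W1' a0 ω) (a0, b1) (x0, x1)))
          (fun ω => (A0 ω, X0 ω, X1 ω, U0 ω, U1 ω) = (a0, x0, x1, u0, u1)) =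
          cexp p (fun ω => -(q0 (Z0 ω) a0 x0))
            (fun ω => (A0 ω, X0 ω, X1 ω, U0 ω, U1 ω) = (a0, x0, x1, u0, u1)) *
          cexp p (fun ω => Y' a0 b1 ω - h1 (W0 ω, W1' a0 ω) (a0, b1) (x0, x1))
            (fun ω => (A0 ω, X0 ω, X1 ω, U0 ω, U1 ω) = (a0, x0, x1, u0, u1)) :=
        hLR1 a0 b1 (fun t => -(q0 t.1 a0 x0))
          (fun t => t.2.2 - h1 (t.1, t.2.1) (a0, b1) (x0, x1)) (a0, x0, x1, u0, u1) ha'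
      have hswap : Stmt13.Ssum p f2a
          (fun ω => (A0 ω, X0 ω, X1 ω, U0 ω, U1 ω) = (a0, x0, x1, u0, u1)) =
          Stmt13.Ssum p (fun ω => (-(q0 (Z0 ω) a0 x0)) *
            (Y' a0 b1 ω - h1 (W0 ω, W1' a0 ω) (a0, b1) (x0, x1)))
          (fun ω => (A0 ω, X0 ω, X1 ω, U0 ω, U1 ω) = (a0, x0, x1, u0, u1)) := by
        refine Stmt13.Ssum_congr p (fun ω => Iff.rfl) (fun ω hω => ?_)
        have h5 : A0 ω = a0 ∧ X0 ω = x0 ∧ X1 ω = x1 ∧ U0 ω = u0 ∧ U1 ω = u1 := by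
          simpa [Prod.ext_iff] using hω
        simp only [hf2a]
        rw [if_pos h5.1, hconsW ω, h5.1, h5.2.1, h5.2.2.1]
        ring
      rw [hswap, Stmt13.Ssum_eq_cexp_mul_pr p _ _ ha', hfac,
        keyG1 x0 x1 u0 u1 ha', mul_zero, zero_mul]
    · show Stmt13.Ssum p f2a
        (fun ω => (A0 ω, X0 ω, X1 ω, U0 ω, U1 ω) = (a0, x0, x1, u0, u1)) = 0
      unfold Stmt13.Ssum
      refine Finset.sum_eq_zero fun ω _ => ?_
      by_cases hEω : (A0 ω, X0 ω, X1 ω, U0 ω, U1 ω) = (a0, x0, x1, u0, u1)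
      · rw [if_pos hEω]
        have hA0 : A0 ω = a0 := congrArg Prod.fst hEω
        have hnot : ¬ (A0 ω = b0) := fun h => hab (by rw [← hA0, h])
        simp only [hf2a]
        rw [if_neg hnot]
        ring
      · rw [if_neg hEω]
  -- piece 2b
  have hsum2b : Stmt13.Ssum p f2b (fun ω => v (X0 ω) = c) = 0 := by
    refine Stmt13.Ssum_zero_of_fiber p hp (fun ω => (X0 ω, U0 ω)) f2b
      (fun t => v t.1 = c) ?_
    intro a ha
    obtain ⟨x0, u0⟩ := a
    show Stmt13.Ssum p f2b (fun ω => (X0 ω, U0 ω) = (x0, u0)) = 0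
    have ha' : pr p (fun ω => (X0 ω, U0 ω) = (x0, u0)) ≠ 0 := ha
    have hfac : cexp p (fun ω => ((if A0 ω = b0 then (1:ℝ) else 0) * q0 (Z0 ω) b0 x0) *
          (Y' b0 b1 ω - h0 (W0 ω) (b0, b1) x0))
        (fun ω => (X0 ω, U0 ω) = (x0, u0)) =
        cexp p (fun ω => (if A0 ω = b0 then (1:ℝ) else 0) * q0 (Z0 ω) b0 x0)
          (fun ω => (X0 ω, U0 ω) = (x0, u0)) *
        cexp p (fun ω => Y' b0 b1 ω - h0 (W0 ω) (b0, b1) x0)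
          (fun ω => (X0 ω, U0 ω) = (x0, u0)) :=
      hLR0 b0 b1 (fun t => (if t.2 = b0 then (1:ℝ) else 0) * q0 t.1 b0 x0)
        (fun t => t.2 - h0 t.1 (b0, b1) x0) (x0, u0) ha'
    have hswap : Stmt13.Ssum p f2b (fun ω => (X0 ω, U0 ω) = (x0, u0)) =
        Stmt13.Ssum p (fun ω => ((if A0 ω = b0 then (1:ℝ) else 0) * q0 (Z0 ω) b0 x0) *
          (Y' b0 b1 ω - h0 (W0 ω) (b0, b1) x0))
        (fun ω => (X0 ω, U0 ω) = (x0, u0)) := by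
      refine Stmt13.Ssum_congr p (fun ω => Iff.rfl) (fun ω hω => ?_)
      have h5 : X0 ω = x0 ∧ U0 ω = u0 := by simpa [Prod.ext_iff] using hω
      simp only [hf2b]
      rw [h5.1]
      try ring
    rw [hswap, Stmt13.Ssum_eq_cexp_mul_pr p _ _ ha', hfac,
      keyG0 x0 u0 ha', mul_zero, zero_mul]
  -- piece 3
  have hsum3 : Stmt13.Ssum p f3 (fun ω => v (X0 ω) = c) = 0 := by
    refine Stmt13.Ssum_zero_of_fiber p hp (fun ω => (X0 ω, U0 ω)) f3
      (fun t => v t.1 = c) ?_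
    intro a ha
    obtain ⟨x0, u0⟩ := a
    show Stmt13.Ssum p f3 (fun ω => (X0 ω, U0 ω) = (x0, u0)) = 0
    have ha' : pr p (fun ω => (X0 ω, U0 ω) = (x0, u0)) ≠ 0 := ha
    have hswap : Stmt13.Ssum p f3 (fun ω => (X0 ω, U0 ω) = (x0, u0)) =
        Stmt13.Ssum p (fun ω => -(Y' b0 b1 ω - h0 (W0 ω) (b0, b1) x0))
        (fun ω => (X0 ω, U0 ω) = (x0, u0)) := by
      refine Stmt13.Ssum_congr p (fun ω => Iff.rfl) (fun ω hω => ?_)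
      have h5 : X0 ω = x0 ∧ U0 ω = u0 := by simpa [Prod.ext_iff] using hω
      simp only [hf3]
      rw [h5.1]
      ring
    have hneg : Stmt13.Ssum p (fun ω => -(Y' b0 b1 ω - h0 (W0 ω) (b0, b1) x0))
        (fun ω => (X0 ω, U0 ω) = (x0, u0)) =
        - Stmt13.Ssum p (fun ω => Y' b0 b1 ω - h0 (W0 ω) (b0, b1) x0)
        (fun ω => (X0 ω, U0 ω) = (x0, u0)) :=
      Stmt13.Ssum_neg p _ _
    rw [hswap, hneg, Stmt13.Ssum_of_cexp_zero p ha' (keyG0 x0 u0 ha'), neg_zero]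
  -- assemble
  have htot : Stmt13.Ssum p (fun ω => Xi (b0, b1) ω - Y' b0 b1 ω)
      (fun ω => v (X0 ω) = c) = 0 := by
    have e : Stmt13.Ssum p (fun ω => Xi (b0, b1) ω - Y' b0 b1 ω)
        (fun ω => v (X0 ω) = c) =
        Stmt13.Ssum p (fun ω => f1 ω + (f2a ω + (f2b ω + f3 ω)))
        (fun ω => v (X0 ω) = c) := by
      refine Stmt13.Ssum_congr p (fun ω => Iff.rfl) (fun ω _ => ?_)
      simp only [hf1, hf2a, hf2b, hf3]
      rw [hXi b0 b1 ω]
      ring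
    have e1 : Stmt13.Ssum p (fun ω => f1 ω + (f2a ω + (f2b ω + f3 ω)))
        (fun ω => v (X0 ω) = c) =
        Stmt13.Ssum p f1 (fun ω => v (X0 ω) = c) +
        Stmt13.Ssum p (fun ω => f2a ω + (f2b ω + f3 ω)) (fun ω => v (X0 ω) = c) :=
      Stmt13.Ssum_add p f1 _ _
    have e2 : Stmt13.Ssum p (fun ω => f2a ω + (f2b ω + f3 ω))
        (fun ω => v (X0 ω) = c) =
        Stmt13.Ssum p f2a (fun ω => v (X0 ω) = c) +
        Stmt13.Ssum p (fun ω => f2b ω + f3 ω) (fun ω => v (X0 ω) = c) :=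
      Stmt13.Ssum_add p f2a _ _
    have e3 : Stmt13.Ssum p (fun ω => f2b ω + f3 ω) (fun ω => v (X0 ω) = c) =
        Stmt13.Ssum p f2b (fun ω => v (X0 ω) = c) +
        Stmt13.Ssum p f3 (fun ω => v (X0 ω) = c) :=
      Stmt13.Ssum_add p f2b f3 _
    rw [e, e1, e2, e3, hsum1, hsum2a, hsum2b, hsum3]
    norm_num
  have hsplit : Stmt13.Ssum p (fun ω => Xi (b0, b1) ω - Y' b0 b1 ω)
      (fun ω => v (X0 ω) = c) =
      Stmt13.Ssum p (Xi (b0, b1)) (fun ω => v (X0 ω) = c) -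
      Stmt13.Ssum p (Y' b0 b1) (fun ω => v (X0 ω) = c) :=
    Stmt13.Ssum_sub p (Xi (b0, b1)) (Y' b0 b1) (fun ω => v (X0 ω) = c)
  rw [hsplit, sub_eq_zero] at htot
  rw [Stmt13.cexp_eq, Stmt13.cexp_eq, htot]
end
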